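/- Let Y be a real-valued random variable with all absolute moments finite, fix a nonzero real λ, and let (Y_j)_{j≥1} be mutually independent random variables each having the same distribution as Y, with S_m = Y_1 + Y_2 + ⋯ + Y_m. Then for every integer n≥0 and every positive integer m, E[(S_m)_{n,λ}] = Σ_{k=0}^{n} {n brace k}_{Y,λ} (m)_k = Σ_{k=0}^{n} (−1)^{n−k} ⟨m⟩_{k,λ} S_{1,λ}^Y(n,k), where (m)_k = m(m−1)⋯(m−k+1). -/

import Mathlib

open MeasureTheory Finset

noncomputable section

/-- The degenerate falling factorial `(x)_{n,λ} = x(x-λ)⋯(x-(n-1)λ)`. -/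
def dff (lam x : ℝ) (n : ℕ) : ℝ := ∏ i ∈ Finset.range n, (x - i * lam)

/-- The degenerate rising factorial `⟨x⟩_{n,λ} = x(x+λ)⋯(x+(n-1)λ)`. -/
def drf (lam x : ℝ) (n : ℕ) : ℝ := ∏ i ∈ Finset.range n, (x + i * lam)

/-- The ordinary falling factorial `(x)_n = x(x-1)⋯(x-n+1)`. -/
def ffall (x : ℝ) (n : ℕ) : ℝ := ∏ i ∈ Finset.range n, (x - i)

/-- The ordinary rising factorial `⟨x⟩_n = x(x+1)⋯(x+n-1)`. -/
def frise (x : ℝ) (n : ℕ) : ℝ := ∏ i ∈ Finset.range n, (x + i)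

/-- Composition `f ∘ g` of formal power series, valid when `g` has zero constant term. -/
def pscomp (f g : PowerSeries ℝ) : PowerSeries ℝ :=
  PowerSeries.mk fun n =>
    ∑ k ∈ Finset.range (n + 1), PowerSeries.coeff k f * PowerSeries.coeff n (g ^ k)

/-- The degenerate moment generating series `F_Y = Σ_{n≥0} E[(Y)_{n,λ}] X^n/n!`. -/
def momSeries (lam : ℝ) {Ω : Type*} [MeasurableSpace Ω] (μ : Measure Ω) (Y : Ω → ℝ) :
    PowerSeries ℝ :=
  PowerSeries.mk fun n => (∫ ω, dff lam (Y ω) n ∂μ) / (n.factorial : ℝ)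

/-- Taylor series at `u = 0` of the degenerate logarithm `log_λ(1+u)`:
`Σ_{n≥1} λ^{n-1} (1)_{n,1/λ} u^n/n!`. -/
def degLogSeries (lam : ℝ) : PowerSeries ℝ :=
  PowerSeries.mk fun n => if n = 0 then 0 else lam ^ (n - 1) * dff (1 / lam) 1 n / (n.factorial : ℝ)

/-- `G_Y`, the degenerate cumulant generating series `log_{-λ}(F_Y)`, i.e. the substitution of
`F_Y - 1` into the Taylor series of `log_{-λ}(1+u)`. -/
def cumSeries (lam : ℝ) {Ω : Type*} [MeasurableSpace Ω] (μ : Measure Ω) (Y : Ω → ℝ) :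
    PowerSeries ℝ :=
  pscomp (degLogSeries (-lam)) (momSeries lam μ Y - 1)

/-- The degenerate cumulants `κ_{n,λ}(Y) := n!·(coefficient of X^n in G_Y)`. -/
def degCumulant (lam : ℝ) {Ω : Type*} [MeasurableSpace Ω] (μ : Measure Ω) (Y : Ω → ℝ)
    (n : ℕ) : ℝ :=
  (n.factorial : ℝ) * PowerSeries.coeff n (cumSeries lam μ Y)

/-- The probabilistic degenerate Stirling numbers of the second kind
`{n brace k}_{Y,λ} := n!·(coefficient of X^n in (F_Y - 1)^k/k!)`. -/
def braceY (lam : ℝ) {Ω : Type*} [MeasurableSpace Ω] (μ : Measure Ω) (Y : Ω → ℝ)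
    (n k : ℕ) : ℝ :=
  (n.factorial : ℝ) * PowerSeries.coeff n ((momSeries lam μ Y - 1) ^ k) / (k.factorial : ℝ)

/-- The probabilistic degenerate Stirling numbers of the first kind, defined by
`(-1)^{n-k} S_{1,λ}^Y(n,k) := n!·(coefficient of X^n in G_Y^k/k!)`. -/
def S1Y (lam : ℝ) {Ω : Type*} [MeasurableSpace Ω] (μ : Measure Ω) (Y : Ω → ℝ)
    (n k : ℕ) : ℝ :=
  (-1 : ℝ) ^ (n - k) * ((n.factorial : ℝ) * PowerSeries.coeff n ((cumSeries lam μ Y) ^ k) / (k.factorial : ℝ))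

/-- Taylor series of `log(1+u)`: `Σ_{n≥1} (-1)^{n-1} u^n/n`. -/
def logSeries : PowerSeries ℝ :=
  PowerSeries.mk fun n => if n = 0 then 0 else (-1 : ℝ) ^ (n - 1) / n

/-- `F^x := exp (x · Log F)` for a power series `F` with constant term `1`. -/
def psPow (F : PowerSeries ℝ) (x : ℝ) : PowerSeries ℝ :=
  pscomp (PowerSeries.exp ℝ) (PowerSeries.C x * pscomp logSeries (F - 1))

/-- `F ↦ F/X`, i.e. the shift sending `Σ a_{n+1} X^{n+1}` (with `a_0 = 0`) to `Σ a_{n+1} X^n`. -/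
def shiftDown (F : PowerSeries ℝ) : PowerSeries ℝ :=
  PowerSeries.mk fun n => PowerSeries.coeff (n + 1) F

/-- The probabilistic degenerate Bernoulli polynomials associated with `Y`:
`Σ_{n≥0} β_{n,λ}^Y(x) X^n/n! = (X/(F_Y-1))·F_Y^x`. -/
def probBernoulli (lam : ℝ) {Ω : Type*} [MeasurableSpace Ω] (μ : Measure Ω) (Y : Ω → ℝ)
    (n : ℕ) (x : ℝ) : ℝ :=
  (n.factorial : ℝ) *
    PowerSeries.coeff n ((shiftDown (momSeries lam μ Y - 1))⁻¹ * psPow (momSeries lam μ Y) x)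

/-- The probabilistic degenerate Euler polynomials associated with `Y`:
`Σ_{n≥0} 𝓔_{n,λ}^Y(x) X^n/n! = (2/(F_Y+1))·F_Y^x`. -/
def probEuler (lam : ℝ) {Ω : Type*} [MeasurableSpace Ω] (μ : Measure Ω) (Y : Ω → ℝ)
    (n : ℕ) (x : ℝ) : ℝ :=
  (n.factorial : ℝ) *
    PowerSeries.coeff n
      (PowerSeries.C 2 * (momSeries lam μ Y + 1)⁻¹ * psPow (momSeries lam μ Y) x)


open ProbabilityTheory

section Aux

lemma ffall_zero (x : ℝ) : ffall x 0 = 1 := by simp [ffall]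

lemma ffall_succ (x : ℝ) (n : ℕ) : ffall x (n + 1) = ffall x n * (x - n) := by
  simp [ffall, prod_range_succ]

lemma ffall_add (x y : ℝ) (n : ℕ) :
    ffall (x + y) n = ∑ k ∈ range (n + 1), (n.choose k : ℝ) * ffall x k * ffall y (n - k) := by
  induction n with
  | zero => simp [ffall]
  | succ n ih =>
    have hS2 : ∑ k ∈ range (n + 2), (n.choose k : ℝ) * ffall x k * ffall y (n + 1 - k)
        = ∑ k ∈ range (n + 1), (n.choose k : ℝ) * ffall x k * (ffall y (n - k) * (y - (n - k : ℕ))) := by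
      rw [Finset.sum_range_succ]
      simp only [Nat.choose_succ_self, Nat.cast_zero, zero_mul, mul_zero, add_zero]
      refine Finset.sum_congr rfl fun k hk => ?_
      have hk' : k ≤ n := Nat.lt_succ_iff.mp (Finset.mem_range.mp hk)
      rw [show n + 1 - k = (n - k) + 1 by omega, ffall_succ]
    have hgoal : ∑ k ∈ range (n + 2), ((n+1).choose k : ℝ) * ffall x k * ffall y (n + 1 - k)
        = (∑ k ∈ range (n + 1), (n.choose k : ℝ) * (ffall x k * (x - k)) * ffall y (n - k))
          + ∑ k ∈ range (n + 2), (n.choose k : ℝ) * ffall x k * ffall y (n + 1 - k) := by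
      rw [Finset.sum_range_succ' (fun k => ((n+1).choose k : ℝ) * ffall x k * ffall y (n + 1 - k)) (n+1),
        Finset.sum_range_succ' (fun k => (n.choose k : ℝ) * ffall x k * ffall y (n + 1 - k)) (n+1)]
      simp only [Nat.choose_succ_succ, Nat.cast_add, Nat.choose_zero_right, Nat.cast_one]
      rw [← add_assoc, ← Finset.sum_add_distrib]
      congr 1
      refine Finset.sum_congr rfl fun k hk => ?_
      have hk' : k ≤ n := Nat.lt_succ_iff.mp (Finset.mem_range.mp hk)
      rw [show n + 1 - (k + 1) = n - k by omega, ffall_succ]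
      push_cast
      ring
    rw [hgoal, hS2, ffall_succ, ih, Finset.sum_mul, ← Finset.sum_add_distrib]
    refine Finset.sum_congr rfl fun k hk => ?_
    have hk' : k ≤ n := Nat.lt_succ_iff.mp (Finset.mem_range.mp hk)
    have hc : ((n - k : ℕ) : ℝ) = (n : ℝ) - k := by
      push_cast [Nat.cast_sub hk']; ring
    rw [hc]; ring

lemma dff_eq_ffall {lam : ℝ} (hlam : lam ≠ 0) (x : ℝ) (n : ℕ) :
    dff lam x n = lam ^ n * ffall (x / lam) n := by
  rw [dff, ffall,
    show lam ^ n = ∏ _i ∈ range n, lam by rw [Finset.prod_const, Finset.card_range],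
    ← Finset.prod_mul_distrib]
  refine Finset.prod_congr rfl fun i _ => ?_
  field_simp

lemma dff_add {lam : ℝ} (hlam : lam ≠ 0) (x y : ℝ) (n : ℕ) :
    dff lam (x + y) n
      = ∑ k ∈ range (n + 1), (n.choose k : ℝ) * dff lam x k * dff lam y (n - k) := by
  have h := ffall_add (x / lam) (y / lam) n
  have hxy : (x + y) / lam = x / lam + y / lam := by ring
  rw [dff_eq_ffall hlam, hxy, h, Finset.mul_sum]
  refine Finset.sum_congr rfl fun k hk => ?_
  have hk' : k ≤ n := Nat.lt_succ_iff.mp (Finset.mem_range.mp hk)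
  rw [dff_eq_ffall hlam, dff_eq_ffall hlam,
    show lam ^ n = lam ^ k * lam ^ (n - k) by rw [← pow_add]; congr 1; omega]
  ring

lemma drf_eq_ffall {lam : ℝ} (hlam : lam ≠ 0) (x : ℝ) (k : ℕ) :
    drf lam x k = (-lam) ^ k * ffall (-(x / lam)) k := by
  rw [drf, ffall,
    show (-lam) ^ k = ∏ _i ∈ range k, (-lam) by rw [Finset.prod_const, Finset.card_range],
    ← Finset.prod_mul_distrib]
  refine Finset.prod_congr rfl fun i _ => ?_
  field_simp
  ring

lemma ffall_descPochhammer (x : ℝ) (n : ℕ) :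
    ffall x n = (descPochhammer ℝ n).eval x := by
  induction n with
  | zero => simp [ffall]
  | succ n ih => rw [ffall_succ, descPochhammer_succ_right, ih]; simp

lemma ffall_nat (m k : ℕ) : ffall (m : ℝ) k = (m.descFactorial k : ℝ) := by
  rw [ffall_descPochhammer, descPochhammer_eval_eq_descFactorial]

lemma ffall_nat_choose (m k : ℕ) : ffall (m : ℝ) k = (k.factorial : ℝ) * (m.choose k : ℝ) := by
  rw [ffall_nat, Nat.descFactorial_eq_factorial_mul_choose]; push_cast; ring

def bin (r : ℝ) : PowerSeries ℝ := PowerSeries.mk fun n => ffall r n / (n.factorial : ℝ)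

lemma coeff_bin (r : ℝ) (n : ℕ) :
    PowerSeries.coeff n (bin r) = ffall r n / (n.factorial : ℝ) := by
  simp [bin]

lemma ffall_zero' (n : ℕ) (hn : n ≠ 0) : ffall 0 n = 0 := by
  obtain ⟨n', rfl⟩ := Nat.exists_eq_succ_of_ne_zero hn
  rw [ffall]
  exact Finset.prod_eq_zero (Finset.mem_range.mpr (Nat.succ_pos n')) (by simp)

lemma bin_zero : bin 0 = 1 := by
  ext n
  rw [coeff_bin]
  cases n with
  | zero => simp [ffall]
  | succ n => simp [ffall_zero' (n+1) (by omega), PowerSeries.coeff_one]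

lemma bin_mul_bin (r s : ℝ) : bin r * bin s = bin (r + s) := by
  ext n
  rw [PowerSeries.coeff_mul, Finset.Nat.sum_antidiagonal_eq_sum_range_succ_mk]
  simp only [coeff_bin]
  rw [ffall_add, Finset.sum_div]
  refine Finset.sum_congr rfl fun k hk => ?_
  have hk' : k ≤ n := Nat.lt_succ_iff.mp (Finset.mem_range.mp hk)
  rw [Nat.cast_choose ℝ hk']
  have h1 : (k.factorial : ℝ) ≠ 0 := Nat.cast_ne_zero.mpr k.factorial_ne_zero
  have h2 : ((n - k).factorial : ℝ) ≠ 0 := Nat.cast_ne_zero.mpr (n - k).factorial_ne_zero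
  have h3 : (n.factorial : ℝ) ≠ 0 := Nat.cast_ne_zero.mpr n.factorial_ne_zero
  field_simp

lemma constantCoeff_bin (r : ℝ) : PowerSeries.constantCoeff (bin r) = 1 := by
  rw [← PowerSeries.coeff_zero_eq_constantCoeff_apply, coeff_bin]
  simp [ffall]

lemma bin_pow (r : ℝ) (p : ℕ) : bin r ^ p = bin (p * r) := by
  induction p with
  | zero => simp [bin_zero]
  | succ p ih =>
    rw [pow_succ, ih, bin_mul_bin]
    congr 1
    push_cast
    ring

lemma coeff_pow_eq_zero {g : PowerSeries ℝ} (hg : PowerSeries.constantCoeff g = 0)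
    {n k : ℕ} (h : n < k) : PowerSeries.coeff n (g ^ k) = 0 := by
  have hd : (PowerSeries.X : PowerSeries ℝ) ^ k ∣ g ^ k :=
    pow_dvd_pow_of_dvd (PowerSeries.X_dvd_iff.mpr hg) k
  exact PowerSeries.X_pow_dvd_iff.mp hd n h

lemma coeff_pow_expand {F : PowerSeries ℝ} (hF : PowerSeries.constantCoeff F = 1)
    (m n : ℕ) :
    PowerSeries.coeff n (F ^ m)
      = ∑ j ∈ range (n + 1), (m.choose j : ℝ) * PowerSeries.coeff n ((F - 1) ^ j) := by
  have hF1 : PowerSeries.constantCoeff (F - 1) = 0 := by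
    simp [map_sub, hF]
  have hexp : F ^ m = ∑ j ∈ range (m + 1), (F - 1) ^ j * (1 : PowerSeries ℝ) ^ (m - j) *
      (m.choose j : PowerSeries ℝ) := by
    rw [← add_pow]; norm_num
  have key : ∀ N, m ≤ N → n ≤ N → PowerSeries.coeff n (F ^ m)
      = ∑ j ∈ range (N + 1), (m.choose j : ℝ) * PowerSeries.coeff n ((F - 1) ^ j) := by
    intro N hm hn
    rw [hexp, map_sum]
    rw [← Finset.sum_subset (Finset.range_subset_range.mpr (by omega : m + 1 ≤ N + 1))]
    · refine Finset.sum_congr rfl fun j _ => ?_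
      rw [one_pow, mul_one]
      rw [show ((m.choose j : ℕ) : PowerSeries ℝ) = PowerSeries.C ((m.choose j : ℕ) : ℝ) by
        simp]
      rw [PowerSeries.coeff_mul_C, mul_comm]
    · intro j _ hj
      have : m < j := by simp only [Finset.mem_range] at hj ⊢; omega
      simp [Nat.choose_eq_zero_of_lt this]
  rw [key (max m n) (le_max_left _ _) (le_max_right _ _),
    ← Finset.sum_subset (Finset.range_subset_range.mpr (by omega : n + 1 ≤ max m n + 1))]
  intro j hj hj'
  have : n < j := by simp only [Finset.mem_range] at hj'; omega
  rw [coeff_pow_eq_zero hF1 this, mul_zero]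

lemma eval_ffall_poly (lam r : ℝ) (j : ℕ) :
    (∏ i ∈ range j, (Polynomial.C (-lam) * Polynomial.X - Polynomial.C (i : ℝ))).eval r
      = ffall (-lam * r) j := by
  rw [Polynomial.eval_prod, ffall]
  exact Finset.prod_congr rfl fun i _ => by simp

lemma stirling_binomial_key {lam : ℝ} (hlam : lam ≠ 0) (m j : ℕ) :
    ∑ k ∈ range (j + 1),
        ffall (-(m / lam)) k / (k.factorial : ℝ)
          * PowerSeries.coeff j ((bin (-lam) - 1) ^ k)
      = (m.choose j : ℝ) := by
  set c : ℕ → ℝ := fun k => PowerSeries.coeff j ((bin (-lam) - 1) ^ k) with hc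
  set P : Polynomial ℝ :=
    ∑ k ∈ range (j + 1), Polynomial.C (c k / (k.factorial : ℝ)) * descPochhammer ℝ k with hP
  set Q : Polynomial ℝ :=
    Polynomial.C (1 / (j.factorial : ℝ))
      * ∏ i ∈ range j, (Polynomial.C (-lam) * Polynomial.X - Polynomial.C (i : ℝ)) with hQ
  have hPeval : ∀ r : ℝ, P.eval r = ∑ k ∈ range (j + 1), c k / (k.factorial : ℝ) * ffall r k := by
    intro r
    rw [hP, Polynomial.eval_finset_sum]
    exact Finset.sum_congr rfl fun k _ => by
      rw [Polynomial.eval_mul, Polynomial.eval_C, ffall_descPochhammer]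
  have hQeval : ∀ r : ℝ, Q.eval r = ffall (-lam * r) j / (j.factorial : ℝ) := by
    intro r
    rw [hQ, Polynomial.eval_mul, Polynomial.eval_C, eval_ffall_poly]
    ring
  have hbin1 : PowerSeries.constantCoeff (bin (-lam)) = 1 := constantCoeff_bin _
  have hnat : ∀ p : ℕ, P.eval (p : ℝ) = Q.eval (p : ℝ) := by
    intro p
    have h1 : P.eval (p : ℝ) = ∑ k ∈ range (j + 1), (p.choose k : ℝ) * c k := by
      rw [hPeval]
      refine Finset.sum_congr rfl fun k _ => ?_
      rw [ffall_nat_choose]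
      have : (k.factorial : ℝ) ≠ 0 := Nat.cast_ne_zero.mpr k.factorial_ne_zero
      field_simp
    have h2 : ∑ k ∈ range (j + 1), (p.choose k : ℝ) * c k
        = PowerSeries.coeff j (bin (-lam) ^ p) := (coeff_pow_expand hbin1 p j).symm
    have h3 : PowerSeries.coeff j (bin (-lam) ^ p) = ffall (-lam * p) j / (j.factorial : ℝ) := by
      rw [bin_pow, coeff_bin]
      congr 2
      ring
    rw [h1, h2, h3, hQeval]
  have hPQ : P = Q := by
    have hroots : Set.Infinite {x : ℝ | (P - Q).IsRoot x} := by
      apply Set.Infinite.mono (s := Set.range ((↑) : ℕ → ℝ))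
      · rintro x ⟨p, rfl⟩
        simp [Polynomial.IsRoot, Polynomial.eval_sub, hnat p]
      · exact Set.infinite_range_of_injective Nat.cast_injective
    exact sub_eq_zero.mp (Polynomial.eq_zero_of_infinite_isRoot (P - Q) hroots)
  have heval := congrArg (Polynomial.eval (-(m / lam))) hPQ
  rw [hPeval, hQeval] at heval
  have hm : -lam * -((m : ℝ) / lam) = (m : ℝ) := by field_simp
  rw [hm, ffall_nat_choose] at heval
  have hjf : (j.factorial : ℝ) ≠ 0 := Nat.cast_ne_zero.mpr j.factorial_ne_zero
  calc ∑ k ∈ range (j + 1),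
        ffall (-(m / lam)) k / (k.factorial : ℝ)
          * PowerSeries.coeff j ((bin (-lam) - 1) ^ k)
      = ∑ k ∈ range (j + 1), c k / (k.factorial : ℝ) * ffall (-(↑m / lam)) k :=
        Finset.sum_congr rfl fun k _ => by rw [hc]; ring
    _ = (j.factorial : ℝ) * (m.choose j : ℝ) / (j.factorial : ℝ) := heval
    _ = (m.choose j : ℝ) := by field_simp

lemma coeff_pscomp (f g : PowerSeries ℝ) (n : ℕ) :
    PowerSeries.coeff n (pscomp f g)
      = ∑ k ∈ range (n + 1), PowerSeries.coeff k f * PowerSeries.coeff n (g ^ k) := by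
  simp [pscomp]

lemma coeff_pscomp_ext {g : PowerSeries ℝ} (hg : PowerSeries.constantCoeff g = 0)
    (f : PowerSeries ℝ) {a N : ℕ} (h : a ≤ N) :
    PowerSeries.coeff a (pscomp f g)
      = ∑ k ∈ range (N + 1), PowerSeries.coeff k f * PowerSeries.coeff a (g ^ k) := by
  rw [coeff_pscomp]
  apply Finset.sum_subset (Finset.range_subset_range.mpr (by omega))
  intro k _ hk
  rw [coeff_pow_eq_zero hg (by simp only [Finset.mem_range] at hk; omega), mul_zero]

lemma triangle_swap (M : ℕ) (G : ℕ → ℕ → ℝ) :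
    ∑ s ∈ range M, ∑ i ∈ range (s + 1), G i (s - i)
      = ∑ i ∈ range M, ∑ j ∈ range (M - i), G i j := by
  rw [Finset.sum_sigma', Finset.sum_sigma']
  refine Finset.sum_nbij' (fun p => ⟨p.2, p.1 - p.2⟩) (fun p => ⟨p.1 + p.2, p.1⟩)
    ?_ ?_ ?_ ?_ ?_
  · rintro ⟨s, i⟩ hp
    simp only [Finset.mem_sigma, Finset.mem_range] at hp ⊢
    omega
  · rintro ⟨i, j⟩ hp
    simp only [Finset.mem_sigma, Finset.mem_range] at hp ⊢
    omega
  · rintro ⟨s, i⟩ hp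
    simp only [Finset.mem_sigma, Finset.mem_range] at hp
    simp only [Sigma.mk.inj_iff]
    constructor <;> first | trivial | omega | exact heq_of_eq (by omega)
  · rintro ⟨i, j⟩ hp
    simp only [Finset.mem_sigma, Finset.mem_range] at hp
    simp only [Sigma.mk.inj_iff]
    constructor <;> first | trivial | omega | exact heq_of_eq (by omega)
  · rintro ⟨s, i⟩ _
    rfl

lemma coeff_pscomp_pow {f g : PowerSeries ℝ} (hg : PowerSeries.constantCoeff g = 0)
    (k n : ℕ) :
    PowerSeries.coeff n ((pscomp f g) ^ k)
      = ∑ j ∈ range (n + 1), PowerSeries.coeff j (f ^ k) * PowerSeries.coeff n (g ^ j) := by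
  induction k generalizing n with
  | zero =>
    simp only [pow_zero]
    rw [Finset.sum_eq_single 0]
    · simp
    · intro j _ hj
      rw [PowerSeries.coeff_one, if_neg hj, zero_mul]
    · intro h
      exact absurd (Finset.mem_range.mpr (by omega)) h
  | succ k ih =>
    have ihN : ∀ a N : ℕ, a ≤ N → PowerSeries.coeff a ((pscomp f g) ^ k)
        = ∑ j ∈ range (N + 1), PowerSeries.coeff j (f ^ k) * PowerSeries.coeff a (g ^ j) := by
      intro a N h
      rw [ih a]
      apply Finset.sum_subset (Finset.range_subset_range.mpr (by omega))
      intro j _ hj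
      rw [coeff_pow_eq_zero hg (by simp only [Finset.mem_range] at hj; omega), mul_zero]
    have hcoeffn : ∀ i j : ℕ, n < i + j → PowerSeries.coeff n (g ^ (i + j)) = 0 :=
      fun i j h => coeff_pow_eq_zero hg h
    rw [pow_succ, PowerSeries.coeff_mul, Finset.Nat.sum_antidiagonal_eq_sum_range_succ_mk]
    have lhs1 : ∀ a ∈ range (n + 1),
        PowerSeries.coeff a ((pscomp f g) ^ k) * PowerSeries.coeff (n - a) (pscomp f g)
        = ∑ i ∈ range (n + 1), ∑ j ∈ range (n + 1),
            PowerSeries.coeff i (f ^ k) * PowerSeries.coeff j f *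
              (PowerSeries.coeff a (g ^ i) * PowerSeries.coeff (n - a) (g ^ j)) := by
      intro a ha
      have ha' : a ≤ n := Nat.lt_succ_iff.mp (Finset.mem_range.mp ha)
      rw [ihN a n ha', coeff_pscomp_ext hg f (by omega : n - a ≤ n), Finset.sum_mul_sum]
      exact Finset.sum_congr rfl fun i _ => Finset.sum_congr rfl fun j _ => by ring
    rw [Finset.sum_congr rfl lhs1, Finset.sum_comm]
    have swap2 : ∀ i, ∑ a ∈ range (n + 1), ∑ j ∈ range (n + 1),
          PowerSeries.coeff i (f ^ k) * PowerSeries.coeff j f *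
            (PowerSeries.coeff a (g ^ i) * PowerSeries.coeff (n - a) (g ^ j))
        = ∑ j ∈ range (n + 1),
            PowerSeries.coeff i (f ^ k) * PowerSeries.coeff j f *
              PowerSeries.coeff n (g ^ (i + j)) := by
      intro i
      rw [Finset.sum_comm]
      refine Finset.sum_congr rfl fun j _ => ?_
      rw [← Finset.mul_sum]
      congr 1
      rw [pow_add, PowerSeries.coeff_mul, Finset.Nat.sum_antidiagonal_eq_sum_range_succ_mk]
    rw [Finset.sum_congr rfl fun i _ => swap2 i]
    -- now LHS = ∑_{i,j ∈ range(n+1)²} Fk_i f_j coeff n g^{i+j}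
    -- RHS = ∑_{s∈range(n+1)} coeff s (f^{k+1}) coeff n g^s
    have rhs1 : ∑ s ∈ range (n + 1),
          PowerSeries.coeff s (f ^ (k + 1)) * PowerSeries.coeff n (g ^ s)
        = ∑ s ∈ range (n + 1), ∑ i ∈ range (s + 1),
            PowerSeries.coeff i (f ^ k) * PowerSeries.coeff (s - i) f *
              PowerSeries.coeff n (g ^ (i + (s - i))) := by
      refine Finset.sum_congr rfl fun s _ => ?_
      rw [pow_succ, PowerSeries.coeff_mul, Finset.Nat.sum_antidiagonal_eq_sum_range_succ_mk,
        Finset.sum_mul]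
      refine Finset.sum_congr rfl fun i hi => ?_
      have : i + (s - i) = s := by
        have := Finset.mem_range.mp hi; omega
      rw [this]
    rw [rhs1,
      triangle_swap (n + 1) (fun i j => PowerSeries.coeff i (f ^ k) *
        PowerSeries.coeff j f * PowerSeries.coeff n (g ^ (i + j)))]
    refine Finset.sum_congr rfl fun i hi => ?_
    have hi' : i ≤ n := Nat.lt_succ_iff.mp (Finset.mem_range.mp hi)
    symm
    apply Finset.sum_subset (Finset.range_subset_range.mpr (by omega : n + 1 - i ≤ n + 1))
    intro j _ hj
    rw [hcoeffn i j (by simp only [Finset.mem_range] at hj; omega), mul_zero]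

lemma ffall_neg_lam {lam : ℝ} (hlam : lam ≠ 0) (n : ℕ) :
    ffall (-lam) n = (-lam) ^ n * dff (1 / -lam) 1 n := by
  rw [ffall, dff,
    show (-lam) ^ n = ∏ _i ∈ range n, (-lam) by rw [Finset.prod_const, Finset.card_range],
    ← Finset.prod_mul_distrib]
  refine Finset.prod_congr rfl fun i _ => ?_
  have hml : (-lam) * ((i : ℝ) * (1 / -lam)) = (i : ℝ) := by
    field_simp
  rw [mul_sub, mul_one, hml]

lemma degLog_eq {lam : ℝ} (hlam : lam ≠ 0) :
    degLogSeries (-lam) = PowerSeries.C (-(1 / lam)) * (bin (-lam) - 1) := by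
  ext n
  rw [PowerSeries.coeff_C_mul, map_sub, coeff_bin, degLogSeries]
  simp only [PowerSeries.coeff_mk]
  cases n with
  | zero => simp [ffall]
  | succ n =>
    rw [if_neg (Nat.succ_ne_zero n)]
    have hco : PowerSeries.coeff (n + 1) (1 : PowerSeries ℝ) = 0 := by
      simp [PowerSeries.coeff_one]
    rw [hco, sub_zero, ffall_neg_lam hlam, Nat.add_sub_cancel]
    have h1 : -(1 / lam) * (-lam) ^ (n + 1) = (-lam) ^ n := by
      rw [pow_succ]
      field_simp
    field_simp
    ring

lemma constantCoeff_degLog (lam : ℝ) :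
    PowerSeries.constantCoeff (degLogSeries lam) = 0 := by
  rw [← PowerSeries.coeff_zero_eq_constantCoeff_apply, degLogSeries]
  simp

lemma key_part2 {F : PowerSeries ℝ} (hF : PowerSeries.constantCoeff F = 1)
    {lam : ℝ} (hlam : lam ≠ 0) (n m : ℕ) :
    ∑ k ∈ range (n + 1), drf lam (m : ℝ) k *
        (PowerSeries.coeff n ((pscomp (degLogSeries (-lam)) (F - 1)) ^ k)
          / (k.factorial : ℝ))
      = PowerSeries.coeff n (F ^ m) := by
  have hF1 : PowerSeries.constantCoeff (F - 1) = 0 := by simp [map_sub, hF]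
  have hbin1 : PowerSeries.constantCoeff (bin (-lam) - 1) = 0 := by
    simp [map_sub, constantCoeff_bin]
  have hunit : (-lam) * (-(1 / lam)) = 1 := by field_simp
  have hstep : ∀ k, drf lam (m : ℝ) k *
        (PowerSeries.coeff n ((pscomp (degLogSeries (-lam)) (F - 1)) ^ k)
          / (k.factorial : ℝ))
      = ∑ j ∈ range (n + 1), (ffall (-(m / lam)) k / (k.factorial : ℝ)
          * PowerSeries.coeff j ((bin (-lam) - 1) ^ k))
          * PowerSeries.coeff n ((F - 1) ^ j) := by
    intro k
    have h1 : (-lam) ^ k * (-(1 / lam)) ^ k = 1 := by rw [← mul_pow, hunit, one_pow]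
    rw [coeff_pscomp_pow hF1, degLog_eq hlam, mul_pow, ← map_pow, Finset.sum_div,
      Finset.mul_sum]
    refine Finset.sum_congr rfl fun j _ => ?_
    rw [PowerSeries.coeff_C_mul, drf_eq_ffall hlam]
    linear_combination (ffall (-((m : ℝ) / lam)) k / (k.factorial : ℝ)
      * PowerSeries.coeff j ((bin (-lam) - 1) ^ k)
      * PowerSeries.coeff n ((F - 1) ^ j)) * h1
  rw [Finset.sum_congr rfl fun k _ => hstep k, Finset.sum_comm]
  have hinner : ∀ j ∈ range (n + 1),
      ∑ k ∈ range (n + 1), (ffall (-(m / lam)) k / (k.factorial : ℝ)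
          * PowerSeries.coeff j ((bin (-lam) - 1) ^ k))
          * PowerSeries.coeff n ((F - 1) ^ j)
      = (m.choose j : ℝ) * PowerSeries.coeff n ((F - 1) ^ j) := by
    intro j hj
    have hj' : j ≤ n := Nat.lt_succ_iff.mp (Finset.mem_range.mp hj)
    rw [← Finset.sum_mul]
    congr 1
    rw [← stirling_binomial_key hlam m j]
    symm
    apply Finset.sum_subset (Finset.range_subset_range.mpr (by omega : j + 1 ≤ n + 1))
    intro k _ hk
    rw [coeff_pow_eq_zero hbin1 (by simp only [Finset.mem_range] at hk; omega), mul_zero]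
  rw [Finset.sum_congr rfl hinner, ← coeff_pow_expand hF ]

variable {Ω : Type*} [MeasurableSpace Ω] {μ : Measure Ω}

lemma measurable_dff_fun (lam : ℝ) (k : ℕ) : Measurable fun x : ℝ => dff lam x k := by
  unfold dff
  exact Finset.measurable_prod _ fun i _ => measurable_id.sub measurable_const

lemma integrable_pow_of_moments {Z : Ω → ℝ} (hZ : AEMeasurable Z μ)
    (hm : ∀ n : ℕ, Integrable (fun ω => |Z ω| ^ n) μ) (i : ℕ) :
    Integrable (fun ω => Z ω ^ i) μ := by
  refine (hm i).mono' ((hZ.pow_const i).aestronglyMeasurable) ?_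
  filter_upwards with ω
  rw [Real.norm_eq_abs, abs_pow]

lemma integrable_dff_of_moments {Z : Ω → ℝ} (hZ : AEMeasurable Z μ)
    (hm : ∀ n : ℕ, Integrable (fun ω => |Z ω| ^ n) μ) (lam : ℝ) (k : ℕ) :
    Integrable (fun ω => dff lam (Z ω) k) μ := by
  set p : Polynomial ℝ := ∏ i ∈ range k, (Polynomial.X - Polynomial.C ((i : ℝ) * lam)) with hp
  have heval : ∀ z : ℝ, dff lam z k = p.eval z := by
    intro z
    rw [hp, Polynomial.eval_prod, dff]
    exact Finset.prod_congr rfl fun i _ => by simp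
  simp_rw [heval, Polynomial.eval_eq_sum_range]
  apply integrable_finset_sum
  intro i _
  exact (integrable_pow_of_moments hZ hm i).const_mul _

lemma abs_pow_add_le (a b : ℝ) (n : ℕ) : |a + b| ^ n ≤ 2 ^ n * (|a| ^ n + |b| ^ n) := by
  calc |a + b| ^ n ≤ (2 * max |a| |b|) ^ n := by
        apply pow_le_pow_left₀ (abs_nonneg _)
        rcases le_total |a| |b| with h | h
        · calc |a + b| ≤ |a| + |b| := abs_add_le a b
            _ ≤ 2 * max |a| |b| := by rw [max_eq_right h]; linarith
        · calc |a + b| ≤ |a| + |b| := abs_add_le a b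
            _ ≤ 2 * max |a| |b| := by rw [max_eq_left h]; linarith
    _ = 2 ^ n * max |a| |b| ^ n := mul_pow 2 _ n
    _ ≤ 2 ^ n * (|a| ^ n + |b| ^ n) := by
        have h1 : (0:ℝ) ≤ 2 ^ n := by positivity
        apply mul_le_mul_of_nonneg_left _ h1
        rcases le_total |a| |b| with h | h
        · rw [max_eq_right h]
          have : (0:ℝ) ≤ |a| ^ n := by positivity
          linarith
        · rw [max_eq_left h]
          have : (0:ℝ) ≤ |b| ^ n := by positivity
          linarith

lemma moments_add {Z W : Ω → ℝ} (hZ : AEMeasurable Z μ) (hW : AEMeasurable W μ)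
    (hmZ : ∀ n : ℕ, Integrable (fun ω => |Z ω| ^ n) μ)
    (hmW : ∀ n : ℕ, Integrable (fun ω => |W ω| ^ n) μ) (n : ℕ) :
    Integrable (fun ω => |Z ω + W ω| ^ n) μ := by
  refine Integrable.mono' (((hmZ n).add (hmW n)).const_mul (2 ^ n)) ?_ ?_
  · exact ((continuous_abs.measurable.comp_aemeasurable (hZ.add hW)).pow_const n).aestronglyMeasurable
  · filter_upwards with ω
    rw [Real.norm_eq_abs, abs_pow, abs_abs]
    exact abs_pow_add_le _ _ n

lemma moments_sum [IsProbabilityMeasure μ] {Zs : ℕ → Ω → ℝ}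
    (hmeas : ∀ j, Measurable (Zs j))
    (hm : ∀ j, ∀ n : ℕ, Integrable (fun ω => |Zs j ω| ^ n) μ) (m : ℕ) (n : ℕ) :
    Integrable (fun ω => |∑ j ∈ range m, Zs j ω| ^ n) μ := by
  induction m generalizing n with
  | zero => simpa using integrable_const (|(0:ℝ)| ^ n)
  | succ m ih =>
    simp_rw [Finset.sum_range_succ]
    exact moments_add
      ((Finset.measurable_sum (range m) fun j _ => hmeas j).aemeasurable)
      (hmeas m).aemeasurable ih (hm m) n

lemma integral_dff_eq (lam : ℝ) (Y : Ω → ℝ) (j : ℕ) :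
    (∫ ω, dff lam (Y ω) j ∂μ)
      = (j.factorial : ℝ) * PowerSeries.coeff j (momSeries lam μ Y) := by
  rw [momSeries, PowerSeries.coeff_mk]
  have : (j.factorial : ℝ) ≠ 0 := Nat.cast_ne_zero.mpr j.factorial_ne_zero
  field_simp

lemma moment_sum_eq [IsProbabilityMeasure μ] {Y : Ω → ℝ} (hY : Measurable Y)
    (hmom : ∀ n : ℕ, Integrable (fun ω => |Y ω| ^ n) μ)
    {lam : ℝ} (hlam : lam ≠ 0) {Zs : ℕ → Ω → ℝ}
    (hmeas : ∀ j, Measurable (Zs j))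
    (hind : iIndepFun Zs μ)
    (hid : ∀ j, IdentDistrib (Zs j) Y μ μ) (m : ℕ) :
    ∀ n : ℕ, (∫ ω, dff lam (∑ j ∈ range m, Zs j ω) n ∂μ)
      = (n.factorial : ℝ) * PowerSeries.coeff n ((momSeries lam μ Y) ^ m) := by
  have hZmom : ∀ j, ∀ p : ℕ, Integrable (fun ω => |Zs j ω| ^ p) μ := by
    intro j p
    have h1 : IdentDistrib (fun ω => |Zs j ω| ^ p) (fun ω => |Y ω| ^ p) μ μ :=
      (hid j).comp ((measurable_abs).pow_const p)
    exact h1.integrable_iff.mpr (hmom p)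
  induction m with
  | zero =>
    intro n
    simp only [Finset.range_zero, Finset.sum_empty, pow_zero]
    cases n with
    | zero =>
      simp only [dff, Finset.range_zero, Finset.prod_empty, Nat.factorial_zero, Nat.cast_one,
        one_mul]
      rw [integral_const, probReal_univ]
      simp [PowerSeries.coeff_zero_eq_constantCoeff]
    | succ n =>
      have hd : dff lam 0 (n + 1) = 0 := by
        rw [dff]
        exact Finset.prod_eq_zero (Finset.mem_range.mpr (Nat.succ_pos n)) (by simp)
      rw [hd]
      simp [PowerSeries.coeff_one]
  | succ m ih =>
    intro n
    have hS : Measurable fun ω => ∑ j ∈ range m, Zs j ω :=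
      Finset.measurable_sum (range m) fun j _ => hmeas j
    have hSmom : ∀ p : ℕ, Integrable (fun ω => |∑ j ∈ range m, Zs j ω| ^ p) μ :=
      fun p => moments_sum hmeas hZmom m p
    have hindep : ∀ k l : ℕ, IndepFun (fun ω => dff lam (∑ j ∈ range m, Zs j ω) k)
        (fun ω => dff lam (Zs m ω) l) μ := by
      intro k l
      have h0 : IndepFun (∑ j ∈ range m, Zs j) (Zs m) μ :=
        hind.indepFun_finsetSum_of_notMem hmeas Finset.notMem_range_self
      have h1 := h0.comp (measurable_dff_fun lam k) (measurable_dff_fun lam l)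
      have he : ((fun x => dff lam x k) ∘ (∑ j ∈ range m, Zs j))
          = fun ω => dff lam (∑ j ∈ range m, Zs j ω) k := by
        funext ω
        simp [Function.comp, Finset.sum_apply]
      have he2 : ((fun x => dff lam x l) ∘ (Zs m)) = fun ω => dff lam (Zs m ω) l := rfl
      rw [he, he2] at h1
      exact h1
    have hintS : ∀ k, Integrable (fun ω => dff lam (∑ j ∈ range m, Zs j ω) k) μ :=
      fun k => integrable_dff_of_moments hS.aemeasurable hSmom lam k
    have hintZ : ∀ l, Integrable (fun ω => dff lam (Zs m ω) l) μ :=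
      fun l => integrable_dff_of_moments (hmeas m).aemeasurable (hZmom m) lam l
    have hprod : ∀ k l, Integrable
        (fun ω => dff lam (∑ j ∈ range m, Zs j ω) k * dff lam (Zs m ω) l) μ :=
      fun k l => (hindep k l).integrable_mul (hintS k) (hintZ l)
    calc (∫ ω, dff lam (∑ j ∈ range (m + 1), Zs j ω) n ∂μ)
        = ∫ ω, ∑ k ∈ range (n + 1), (n.choose k : ℝ) *
            dff lam (∑ j ∈ range m, Zs j ω) k * dff lam (Zs m ω) (n - k) ∂μ := by
          apply integral_congr_ae
          filter_upwards with ω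
          rw [Finset.sum_range_succ, dff_add hlam]
      _ = ∑ k ∈ range (n + 1), ∫ ω, (n.choose k : ℝ) *
            dff lam (∑ j ∈ range m, Zs j ω) k * dff lam (Zs m ω) (n - k) ∂μ := by
          apply integral_finset_sum
          intro k _
          simpa [mul_assoc] using ((hprod k (n - k)).const_mul ((n.choose k : ℝ)))
      _ = ∑ k ∈ range (n + 1), (n.choose k : ℝ) *
            ((∫ ω, dff lam (∑ j ∈ range m, Zs j ω) k ∂μ) *
              ∫ ω, dff lam (Zs m ω) (n - k) ∂μ) := by
          refine Finset.sum_congr rfl fun k _ => ?_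
          rw [← (hindep k (n - k)).integral_mul_eq_mul_integral (hintS k).aestronglyMeasurable (hintZ (n - k)).aestronglyMeasurable]
          simp_rw [mul_assoc]
          exact integral_const_mul _ _
      _ = ∑ k ∈ range (n + 1), (n.choose k : ℝ) *
            (((k.factorial : ℝ) * PowerSeries.coeff k ((momSeries lam μ Y) ^ m)) *
              (((n - k).factorial : ℝ) *
                PowerSeries.coeff (n - k) (momSeries lam μ Y))) := by
          refine Finset.sum_congr rfl fun k _ => ?_
          rw [ih k]
          congr 2
          have h2 := ((hid m).comp (measurable_dff_fun lam (n - k))).integral_eq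
          simp only [Function.comp_def] at h2
          rw [h2, integral_dff_eq]
      _ = (n.factorial : ℝ) * PowerSeries.coeff n ((momSeries lam μ Y) ^ (m + 1)) := by
          rw [pow_succ, PowerSeries.coeff_mul,
            Finset.Nat.sum_antidiagonal_eq_sum_range_succ_mk, Finset.mul_sum]
          refine Finset.sum_congr rfl fun k hk => ?_
          have hk' : k ≤ n := Nat.lt_succ_iff.mp (Finset.mem_range.mp hk)
          have hfac : ((n.choose k : ℕ) : ℝ) * (k.factorial : ℝ) * ((n - k).factorial : ℝ)
              = (n.factorial : ℝ) := by
            rw [← Nat.cast_mul, ← Nat.cast_mul, Nat.choose_mul_factorial_mul_factorial hk']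
          linear_combination (PowerSeries.coeff k (momSeries lam μ Y ^ m)
            * PowerSeries.coeff (n - k) (momSeries lam μ Y)) * hfac

lemma biInter_ae_congr {ι : Type*} (s : Finset ι) (B C : ι → Set Ω)
    (h : ∀ i ∈ s, (B i : Set Ω) =ᵐ[μ] C i) :
    ((⋂ i ∈ s, B i) : Set Ω) =ᵐ[μ] ⋂ i ∈ s, C i := by
  classical
  induction s using Finset.induction_on with
  | empty =>
    have h1 : (⋂ i ∈ (∅ : Finset ι), B i) = Set.univ := by simp
    have h2 : (⋂ i ∈ (∅ : Finset ι), C i) = Set.univ := by simp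
    rw [h1, h2]
    exact Filter.EventuallyEq.rfl
  | @insert a s ha ih =>
    rw [Finset.set_biInter_insert, Finset.set_biInter_insert]
    exact (h a (Finset.mem_insert_self a s)).inter
      (ih fun i hi => h i (Finset.mem_insert_of_mem hi))

lemma iIndepFun_of_ae_eq {f g : ℕ → Ω → ℝ} (h : ∀ i, f i =ᵐ[μ] g i)
    (hf : iIndepFun f μ) :
    iIndepFun g μ := by
  rw [ProbabilityTheory.iIndepFun_iff] at hf ⊢
  intro s f' H
  have H' : ∀ i, ∃ t : Set ℝ, i ∈ s → (MeasurableSet t ∧ g i ⁻¹' t = f' i) := by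
    intro i
    by_cases hi : i ∈ s
    · obtain ⟨t, ht, hteq⟩ := H i hi
      exact ⟨t, fun _ => ⟨ht, hteq⟩⟩
    · exact ⟨∅, fun hh => absurd hh hi⟩
  choose A hA using H'
  have hae : ∀ i ∈ s, (f' i : Set Ω) =ᵐ[μ] f i ⁻¹' A i := by
    intro i hi
    rw [← (hA i hi).2]
    filter_upwards [h i] with ω hω
    change (g i ω ∈ A i) = (f i ω ∈ A i)
    rw [hω]
  calc μ (⋂ i ∈ s, f' i) = μ (⋂ i ∈ s, f i ⁻¹' A i) :=
        measure_congr (biInter_ae_congr s _ _ hae)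
    _ = ∏ i ∈ s, μ (f i ⁻¹' A i) :=
        hf s fun i hi => MeasurableSpace.measurableSet_comap.mpr ⟨A i, (hA i hi).1, rfl⟩
    _ = ∏ i ∈ s, μ (f' i) :=
        Finset.prod_congr rfl fun i hi => (measure_congr (hae i hi)).symm

end Aux

theorem moment_sum_iid_eq_sum_braceY_eq_sum_S1Y {Ω : Type*} [MeasurableSpace Ω] (μ : MeasureTheory.Measure Ω)
    [MeasureTheory.IsProbabilityMeasure μ] (Y : Ω → ℝ) (hY : Measurable Y)
    (hmom : ∀ n : ℕ, MeasureTheory.Integrable (fun ω => |Y ω| ^ n) μ)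
    (lam : ℝ) (hlam : lam ≠ 0)
    (Ys : ℕ → Ω → ℝ)
    (hind : ProbabilityTheory.iIndepFun Ys μ)
    (hid : ∀ j : ℕ, ProbabilityTheory.IdentDistrib (Ys j) Y μ μ)
    (n m : ℕ) (hm : 1 ≤ m) :
    (∫ ω, dff lam (∑ j ∈ Finset.range m, Ys j ω) n ∂μ) =
        ∑ k ∈ Finset.range (n + 1), braceY lam μ Y n k * ffall (m : ℝ) k ∧
      (∫ ω, dff lam (∑ j ∈ Finset.range m, Ys j ω) n ∂μ) =
        ∑ k ∈ Finset.range (n + 1), (-1 : ℝ) ^ (n - k) * drf lam (m : ℝ) k * S1Y lam μ Y n k := by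
  classical
  have hF : PowerSeries.constantCoeff (momSeries lam μ Y) = 1 := by
    rw [← PowerSeries.coeff_zero_eq_constantCoeff_apply, momSeries, PowerSeries.coeff_mk]
    simp [dff]
  have haem : ∀ j, AEMeasurable (Ys j) μ := fun j => (hid j).aemeasurable_fst
  set Zs : ℕ → Ω → ℝ := fun j => (haem j).mk (Ys j) with hZdef
  have hZmeas : ∀ j, Measurable (Zs j) := fun j => (haem j).measurable_mk
  have haeeq : ∀ j, Ys j =ᵐ[μ] Zs j := fun j => (haem j).ae_eq_mk
  have hindZ : ProbabilityTheory.iIndepFun Zs μ :=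
    iIndepFun_of_ae_eq haeeq hind
  have hidZ : ∀ j, ProbabilityTheory.IdentDistrib (Zs j) Y μ μ := fun j =>
    ⟨(hZmeas j).aemeasurable, (hid j).aemeasurable_snd, by
      rw [← Measure.map_congr (haeeq j)]; exact (hid j).map_eq⟩
  have hsum_ae : (∫ ω, dff lam (∑ j ∈ Finset.range m, Ys j ω) n ∂μ)
      = ∫ ω, dff lam (∑ j ∈ Finset.range m, Zs j ω) n ∂μ := by
    apply integral_congr_ae
    have hall : ∀ᵐ ω ∂μ, ∀ j, Ys j ω = Zs j ω :=
      (MeasureTheory.ae_all_iff).mpr fun j => haeeq j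
    filter_upwards [hall] with ω hω
    rw [Finset.sum_congr rfl fun j _ => hω j]
  have hmain : (∫ ω, dff lam (∑ j ∈ Finset.range m, Ys j ω) n ∂μ)
      = (n.factorial : ℝ) * PowerSeries.coeff n ((momSeries lam μ Y) ^ m) := by
    rw [hsum_ae]
    exact moment_sum_eq hY hmom hlam hZmeas hindZ hidZ m n
  constructor
  · rw [hmain, coeff_pow_expand hF m n, Finset.mul_sum]
    refine Finset.sum_congr rfl fun k _ => ?_
    rw [braceY, ffall_nat_choose]
    have hk : (k.factorial : ℝ) ≠ 0 := Nat.cast_ne_zero.mpr k.factorial_ne_zero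
    field_simp
  · rw [hmain, ← key_part2 hF hlam n m, Finset.mul_sum]
    refine Finset.sum_congr rfl fun k _ => ?_
    rw [S1Y, cumSeries]
    have h1 : ((-1 : ℝ)) ^ (n - k) * (-1 : ℝ) ^ (n - k) = 1 := by
      rw [← mul_pow]; norm_num
    linear_combination (-(drf lam (m : ℝ) k * ((n.factorial : ℝ) *
      PowerSeries.coeff n ((pscomp (degLogSeries (-lam)) (momSeries lam μ Y - 1)) ^ k)
        / (k.factorial : ℝ)))) * h1

end
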